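/- Let A be a unital C*-algebra and α : A → A a *-endomorphism. The set I₂ = {a ∈ A : lim_{n→∞} α^n(a) = 0} coincides with the closure I₁ of {a ∈ A : α^n(a) = 0 for some n ∈ ℕ}, and this set is an α-invariant closed two-sided ideal of A such that the induced endomorphism on the quotient A/I₁ is injective. Moreover, I₁ is the smallest α-invariant closed ideal with this property. -/
import Mathlib


open Filter Topology

section Aux

variable {A : Type*} [CStarAlgebra A]

/-- Iterates of a star algebra endomorphism, bundled. -/
private def αpow (α : A →⋆ₐ[ℂ] A) : ℕ → (A →⋆ₐ[ℂ] A)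
  | 0 => StarAlgHom.id ℂ A
  | n + 1 => (αpow α n).comp α

private lemma αpow_apply (α : A →⋆ₐ[ℂ] A) (n : ℕ) (a : A) :
    αpow α n a = (⇑α)^[n] a := by
  induction n generalizing a with
  | zero => rfl
  | succ n ih =>
    rw [Function.iterate_succ_apply]
    exact ih (α a)

/-- Key approximation lemma: an element can be approximated by elements of the kernel of a
star homomorphism `φ` up to `‖φ a‖`. -/
private lemma key (φ : A →⋆ₐ[ℂ] A) (a : A) {ε : ℝ} (hε : 0 < ε) :
    ∃ c : A, φ c = 0 ∧ ‖a - c‖ ^ 2 ≤ ‖φ a‖ ^ 2 + ε := by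
  rcases subsingleton_or_nontrivial A with hA | hA
  · exact ⟨a, Subsingleton.elim _ _, by simpa using (by positivity : (0:ℝ) ≤ ‖φ a‖ ^ 2 + ε)⟩
  set r : ℝ := ‖φ a‖ with hr
  set p : A := star a * a with hp
  have hpsa : IsSelfAdjoint p := IsSelfAdjoint.star_mul_self a
  set h : ℝ → ℝ := fun t => min 1 (max 0 ((|t| - r ^ 2) / ε)) with hh
  have hcont : Continuous h := by
    apply Continuous.min continuous_const
    apply Continuous.max continuous_const
    exact (continuous_abs.sub continuous_const).div_const _
  have h01 : ∀ t, 0 ≤ h t ∧ h t ≤ 1 := fun t =>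
    ⟨le_min zero_le_one (le_max_left _ _), min_le_left _ _⟩
  have hcont1 : Continuous fun t : ℝ => 1 - h t := continuous_const.sub hcont
  set b : A := cfc h p with hb
  have hbsa : IsSelfAdjoint b := cfc_predicate h p
  have hφcont : Continuous ⇑φ := AddMonoidHomClass.continuous_of_bound φ 1
    (fun x => by simpa [one_mul] using NonUnitalStarAlgHom.norm_apply_le φ x)
  have hφp : IsSelfAdjoint (φ p) := by
    rw [hp, map_mul, map_star]
    exact IsSelfAdjoint.star_mul_self (φ a)
  refine ⟨a * b, ?_, ?_⟩
  · have h1 : φ b = cfc h (φ p) :=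
      StarAlgHom.map_cfc φ h p hcont.continuousOn hφcont hpsa hφp
    have h2 : cfc h (φ p) = 0 := by
      have hz : (spectrum ℝ (φ p)).EqOn h (fun _ => 0) := by
        intro t ht
        have hnorm : ‖t‖ ≤ ‖φ p‖ := spectrum.norm_le_norm_of_mem ht
        have hφpn : ‖φ p‖ = r ^ 2 := by
          rw [hp, map_mul, map_star, CStarRing.norm_star_mul_self, ← hr, sq]
        have habs : |t| ≤ r ^ 2 := by rwa [Real.norm_eq_abs, hφpn] at hnorm
        have hdiv : (|t| - r ^ 2) / ε ≤ 0 := div_nonpos_iff.mpr (Or.inr ⟨by linarith, hε.le⟩)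
        show min 1 (max 0 ((|t| - r ^ 2) / ε)) = 0
        rw [max_eq_left hdiv, min_eq_right zero_le_one]
      calc cfc h (φ p) = cfc (fun _ : ℝ => (0 : ℝ)) (φ p) := cfc_congr hz
        _ = 0 := by simp
    rw [map_mul, h1, h2, mul_zero]
  · have hab : a - a * b = a * (1 - b) := (mul_one_sub a b).symm
    have e1 : (1 : A) - b = cfc (fun t => 1 - h t) p := by
      rw [cfc_sub (fun _ => (1 : ℝ)) h p continuousOn_const hcont.continuousOn,
        cfc_const_one ℝ p]
    have e2 : star (a * (1 - b)) * (a * (1 - b)) = (1 - b) * p * (1 - b) := by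
      have h1b : star ((1 : A) - b) = 1 - b := (IsSelfAdjoint.one (R := A)).sub hbsa
      rw [star_mul, h1b, hp]
      simp only [mul_assoc]
    have e3 : ((1 : A) - b) * p * (1 - b)
        = cfc (fun t => (1 - h t) * t * (1 - h t)) p := by
      rw [cfc_mul (fun t => (1 - h t) * t) (fun t => 1 - h t) p
          (hcont1.mul continuous_id).continuousOn hcont1.continuousOn,
        cfc_mul (fun t => 1 - h t) (fun t => t) p hcont1.continuousOn
          continuousOn_id, cfc_id' ℝ p, ← e1]
    have e4 : ‖cfc (fun t => (1 - h t) * t * (1 - h t)) p‖ ≤ r ^ 2 + ε := by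
      apply norm_cfc_le (by positivity)
      intro t _
      rcases le_or_gt (|t|) (r ^ 2 + ε) with hle | hgt
      · have h1 : 0 ≤ 1 - h t := by linarith [(h01 t).2]
        have h2 : 1 - h t ≤ 1 := by linarith [(h01 t).1]
        have : |(1 - h t) * t * (1 - h t)| = (1 - h t) * |t| * (1 - h t) := by
          rw [abs_mul, abs_mul, abs_of_nonneg h1]
        have k1 : (1 - h t) * (1 - h t) ≤ 1 := by nlinarith
        rw [Real.norm_eq_abs, this]
        calc (1 - h t) * |t| * (1 - h t) = ((1 - h t) * (1 - h t)) * |t| := by ring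
          _ ≤ 1 * |t| := mul_le_mul_of_nonneg_right k1 (abs_nonneg t)
          _ = |t| := one_mul _
          _ ≤ r ^ 2 + ε := hle
      · have hone : h t = 1 := by
          have h1 : (1 : ℝ) ≤ (|t| - r ^ 2) / ε := (one_le_div hε).mpr (by linarith)
          show min 1 (max 0 ((|t| - r ^ 2) / ε)) = 1
          rw [min_eq_left (le_max_of_le_right h1)]
        rw [hone]
        simp [norm_zero]
        positivity
    calc ‖a - a * b‖ ^ 2 = ‖star (a * (1 - b)) * (a * (1 - b))‖ := by
          rw [hab, sq, ← CStarRing.norm_star_mul_self]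
      _ = ‖cfc (fun t => (1 - h t) * t * (1 - h t)) p‖ := by rw [e2, e3]
      _ ≤ r ^ 2 + ε := e4

end Aux

/-- For a *-endomorphism `α` of a unital C*-algebra `A`, the set
`I₂ = {a : αⁿ(a) → 0}` coincides with the closure `I₁` of `{a : αⁿ(a) = 0 for some n}`;
this set is an `α`-invariant closed two-sided ideal such that the induced endomorphism of
`A/I₁` is injective (equivalently `α(a) ∈ I₁ → a ∈ I₁`), and it is the smallest
`α`-invariant closed ideal with this property. -/
theorem limit_ideal_properties
    {A : Type*} [CStarAlgebra A] (α : A →⋆ₐ[ℂ] A) :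
    {a : A | Tendsto (fun n => (⇑α)^[n] a) atTop (𝓝 0)}
      = closure {a : A | ∃ n : ℕ, (⇑α)^[n] a = 0} ∧
    IsClosed (closure {a : A | ∃ n : ℕ, (⇑α)^[n] a = 0}) ∧
    (∃ I : TwoSidedIdeal A, (I : Set A) = closure {a : A | ∃ n : ℕ, (⇑α)^[n] a = 0}) ∧
    (∀ a ∈ closure {a : A | ∃ n : ℕ, (⇑α)^[n] a = 0},
      α a ∈ closure {a : A | ∃ n : ℕ, (⇑α)^[n] a = 0}) ∧
    (∀ a : A, α a ∈ closure {a : A | ∃ n : ℕ, (⇑α)^[n] a = 0} →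
      a ∈ closure {a : A | ∃ n : ℕ, (⇑α)^[n] a = 0}) ∧
    (∀ K : TwoSidedIdeal A, IsClosed (K : Set A) →
      (∀ a ∈ K, α a ∈ K) → (∀ a : A, α a ∈ K → a ∈ K) →
      closure {a : A | ∃ n : ℕ, (⇑α)^[n] a = 0} ⊆ (K : Set A)) := by
  set N : Set A := {a : A | ∃ n : ℕ, (⇑α)^[n] a = 0} with hN
  set I₂ : Set A := {a : A | Tendsto (fun n => (⇑α)^[n] a) atTop (𝓝 0)} with hI₂
  -- basic facts about iterates
  have iter_zero : ∀ n : ℕ, (⇑α)^[n] (0 : A) = 0 := fun n =>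
    Function.iterate_fixed (map_zero α) n
  have vanish_mono : ∀ (x : A) (n m : ℕ), n ≤ m → (⇑α)^[n] x = 0 → (⇑α)^[m] x = 0 := by
    intro x n m hnm hx
    obtain ⟨k, rfl⟩ := Nat.exists_eq_add_of_le hnm
    rw [Nat.add_comm, Function.iterate_add_apply, hx, iter_zero]
  have iter_norm_le : ∀ (n : ℕ) (x : A), ‖(⇑α)^[n] x‖ ≤ ‖x‖ := by
    intro n
    induction n with
    | zero => exact fun x => le_rfl
    | succ n ih =>
      intro x
      rw [Function.iterate_succ_apply']
      exact (NonUnitalStarAlgHom.norm_apply_le α _).trans (ih x)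
  -- I₂ is closed
  have hI₂closed : IsClosed I₂ := by
    rw [← closure_subset_iff_isClosed]
    intro a ha
    simp only [hI₂, Set.mem_setOf_eq, NormedAddCommGroup.tendsto_nhds_zero]
    intro ε hε
    obtain ⟨b, hbI, hab⟩ := Metric.mem_closure_iff.mp ha (ε / 2) (by positivity)
    have hb : Tendsto (fun n => (⇑α)^[n] b) atTop (𝓝 0) := hbI
    rw [NormedAddCommGroup.tendsto_nhds_zero] at hb
    filter_upwards [hb (ε / 2) (by positivity)] with n hn
    have h1 : ‖(⇑α)^[n] a - (⇑α)^[n] b‖ ≤ ‖a - b‖ := by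
      have : (⇑α)^[n] a - (⇑α)^[n] b = (⇑α)^[n] (a - b) := by
        rw [← αpow_apply, ← αpow_apply, ← αpow_apply, map_sub]
      rw [this]
      exact iter_norm_le n _
    have h2 : ‖a - b‖ < ε / 2 := by rwa [← dist_eq_norm]
    calc ‖(⇑α)^[n] a‖ = ‖((⇑α)^[n] a - (⇑α)^[n] b) + (⇑α)^[n] b‖ := by
          congr 1
          abel
      _ ≤ ‖(⇑α)^[n] a - (⇑α)^[n] b‖ + ‖(⇑α)^[n] b‖ := norm_add_le _ _
      _ < ε / 2 + ε / 2 := add_lt_add_of_le_of_lt (h1.trans h2.le) hn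
      _ = ε := by ring
  -- N ⊆ I₂
  have hNI₂ : N ⊆ I₂ := by
    rintro x ⟨n, hn⟩
    apply tendsto_const_nhds.congr'
    filter_upwards [eventually_ge_atTop n] with m hm
    exact (vanish_mono x n m hm hn).symm
  -- the crucial inclusion I₂ ⊆ closure N
  have hI₂N : I₂ ⊆ closure N := by
    intro a ha
    rw [Metric.mem_closure_iff]
    intro δ hδ
    have ha' : Tendsto (fun n => (⇑α)^[n] a) atTop (𝓝 0) := ha
    rw [NormedAddCommGroup.tendsto_nhds_zero] at ha'
    obtain ⟨n, hn⟩ := (ha' (δ / 2) (by positivity)).exists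
    obtain ⟨c, hc0, hc⟩ := key (αpow α n) a (ε := δ ^ 2 / 2) (by positivity)
    refine ⟨c, ⟨n, by rw [← αpow_apply]; exact hc0⟩, ?_⟩
    have hr : ‖αpow α n a‖ < δ / 2 := by rw [αpow_apply]; exact hn
    have hsq : ‖a - c‖ ^ 2 < δ ^ 2 := by nlinarith [norm_nonneg (αpow α n a)]
    rw [dist_eq_norm]
    exact lt_of_pow_lt_pow_left₀ 2 hδ.le hsq
  have main : I₂ = closure N := le_antisymm hI₂N (closure_minimal hNI₂ hI₂closed)
  -- closure N is an ideal
  have Nzero : (0 : A) ∈ N := ⟨0, rfl⟩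
  have Nadd : ∀ {x y : A}, x ∈ closure N → y ∈ closure N → x + y ∈ closure N := by
    intro x y hx hy
    refine map_mem_closure₂ continuous_add hx hy ?_
    rintro u ⟨m, hm⟩ v ⟨k, hk⟩
    refine ⟨max m k, ?_⟩
    rw [← αpow_apply, map_add, αpow_apply, αpow_apply,
      vanish_mono u m _ (le_max_left m k) hm,
      vanish_mono v k _ (le_max_right m k) hk, add_zero]
  have Nneg : ∀ {x : A}, x ∈ closure N → -x ∈ closure N := by
    intro x hx
    refine map_mem_closure continuous_neg hx ?_
    rintro u ⟨m, hm⟩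
    exact ⟨m, by rw [← αpow_apply, map_neg, αpow_apply, hm, neg_zero]⟩
  have Nmull : ∀ {x y : A}, y ∈ closure N → x * y ∈ closure N := by
    intro x y hy
    refine map_mem_closure (continuous_mul_left x) hy ?_
    rintro u ⟨m, hm⟩
    exact ⟨m, by rw [← αpow_apply, map_mul, αpow_apply, αpow_apply, hm, mul_zero]⟩
  have Nmulr : ∀ {x y : A}, x ∈ closure N → x * y ∈ closure N := by
    intro x y hx
    refine map_mem_closure (f := (· * y)) (continuous_mul_right y) hx ?_
    rintro u ⟨m, hm⟩
    exact ⟨m, by rw [← αpow_apply, map_mul, αpow_apply, αpow_apply, hm, zero_mul]⟩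
  refine ⟨main, isClosed_closure, ?_, ?_, ?_, ?_⟩
  · exact ⟨TwoSidedIdeal.mk' (closure N) (subset_closure Nzero) Nadd Nneg Nmull Nmulr,
      TwoSidedIdeal.coe_mk' _ _ _ _ _ _⟩
  · -- α-invariance
    intro a ha
    have hαcont : Continuous ⇑α := AddMonoidHomClass.continuous_of_bound α 1
      (fun x => by simpa [one_mul] using NonUnitalStarAlgHom.norm_apply_le α x)
    refine map_mem_closure hαcont ha ?_
    rintro u ⟨m, hm⟩
    refine ⟨m, ?_⟩
    rw [← Function.iterate_succ_apply, Function.iterate_succ_apply', hm, map_zero]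
  · -- injectivity on quotient
    intro a ha
    rw [← main] at ha ⊢
    have : Tendsto (fun n => (⇑α)^[n] (α a)) atTop (𝓝 0) := ha
    show Tendsto (fun n => (⇑α)^[n] a) atTop (𝓝 0)
    have h1 : (fun n => (⇑α)^[n] (α a)) = fun n => (⇑α)^[n + 1] a := by
      funext n
      rw [Function.iterate_succ_apply]
    rw [h1] at this
    exact (tendsto_add_atTop_iff_nat 1).mp this
  · -- minimality
    intro K hKclosed hKinv hKinj
    refine closure_minimal ?_ hKclosed
    have hmain : ∀ (n : ℕ) (x : A), (⇑α)^[n] x = 0 → x ∈ K := by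
      intro n
      induction n with
      | zero =>
        intro x hx
        simp only [Function.iterate_zero, id_eq] at hx
        rw [hx]
        exact K.zero_mem
      | succ n ih =>
        intro x hx
        refine hKinj x (ih (α x) ?_)
        rw [← Function.iterate_succ_apply]
        exact hx
    rintro x ⟨n, hn⟩
    exact hmain n x hn
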